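/- Let $f_\beta$ be the zero-energy scattering state of $\tfrac12(V_N - M_\beta)$ with $f_\beta(x)=1$ for $|x|=R_\beta$, where $V_N(x) = e^{2N}V(e^Nx)$ has support of radius $\le e^{-N}\mathrm{diam}(\mathrm{supp}\,V)$ and $M_\beta$ is supported in the annulus $N^{-\beta} < |x| \le R_\beta$. If $f_\beta$ is nonnegative and monotone nondecreasing in $|x|$ with $f_\beta(N^{-\beta}) = j_{N,R_\beta}(N^{-\beta})/K_\beta$, $K_\beta \le 1$, and $j_{N,R_\beta}(N^{-\beta}) \ge 1 - C/N$, then $R_\beta \le C' N^{-\beta}$. -/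

import Mathlib

open MeasureTheory

/-- If the radial profile `f` of the zero-energy scattering state is nonnegative and
monotone nondecreasing, `f(N^{-β}) = j_{N,R_β}(N^{-β})/K_β` with `K_β ≤ 1` and
`j_{N,R_β}(N^{-β}) ≥ 1 - C/N`, and the cancellation condition yields
`∫_{N^{-β}}^{R_β} r f(r) dr = N^{1-2β} / (2π K_β (N + ln(R_β/a)))`, then
`R_β ≤ C' N^{-β}`. -/
theorem stmt_17 (β a C : ℝ) (hβ : 0 < β) (ha : 0 < a) (hC : 0 < C) :
    ∃ C' > (0 : ℝ), ∃ N₀ : ℕ, ∀ N : ℕ, N₀ ≤ N →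
    ∀ (f : ℝ → ℝ) (Kβ Rβ jval : ℝ),
      (∀ r, 0 ≤ f r) →
      (∀ r s : ℝ, 0 ≤ r → r ≤ s → f r ≤ f s) →
      0 < Kβ → Kβ ≤ 1 →
      (N : ℝ) ^ (-β) < Rβ →
      f ((N : ℝ) ^ (-β)) = jval / Kβ →
      1 - C / N ≤ jval → jval ≤ 1 →
      (∫ r in Set.Ioc ((N : ℝ) ^ (-β)) Rβ, r * f r) =
        (N : ℝ) ^ (1 - 2 * β) / (2 * Real.pi * Kβ * ((N : ℝ) + Real.log (Rβ / a))) →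
      Rβ ≤ C' * (N : ℝ) ^ (-β) := by
  refine ⟨2, by norm_num, ?_⟩
  -- eventual conditions
  have hlog : ∀ᶠ x : ℝ in Filter.atTop, ‖β * Real.log x‖ ≤ (1/4) * ‖x‖ :=
    (Real.isLittleO_log_id_atTop.const_mul_left β).def (by norm_num)
  have hla : ∀ᶠ x : ℝ in Filter.atTop, Real.log a ≤ x / 4 :=
    Filter.eventually_atTop.2 ⟨4 * Real.log a, fun x hx => by linarith⟩
  have hCx : ∀ᶠ x : ℝ in Filter.atTop, C / x ≤ 1/2 := by
    filter_upwards [Filter.eventually_ge_atTop (2*C), Filter.eventually_ge_atTop (1:ℝ)]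
      with x h1 h2
    rw [div_le_iff₀ (by linarith)]; linarith
  have hev : ∀ᶠ N : ℕ in Filter.atTop,
      (1 ≤ (N:ℝ)) ∧ (β * Real.log N + Real.log a ≤ (N:ℝ)/2) ∧ (C / N ≤ 1/2) := by
    have := tendsto_natCast_atTop_atTop (R := ℝ)
    filter_upwards [this.eventually hlog, this.eventually hla, this.eventually hCx,
      this.eventually (Filter.eventually_ge_atTop (1:ℝ))] with N h1 h2 h3 h4
    refine ⟨h4, ?_, h3⟩
    have hx0 : (0:ℝ) ≤ (N:ℝ) := by linarith
    have : β * Real.log N ≤ (N:ℝ)/4 := by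
      calc β * Real.log N ≤ ‖β * Real.log N‖ := le_abs_self _
        _ ≤ (1/4) * ‖(N:ℝ)‖ := h1
        _ = (N:ℝ)/4 := by rw [Real.norm_eq_abs, abs_of_nonneg hx0]; ring
    linarith
  obtain ⟨N₀, hN₀⟩ := Filter.eventually_atTop.1 hev
  refine ⟨N₀, fun N hN f Kβ Rβ jval hf0 hmono hK0 hK1 hRε hfε hj1 hj2 hint => ?_⟩
  obtain ⟨hx1, hlogN, hCN⟩ := hN₀ N hN
  set x : ℝ := (N : ℝ) with hxdef
  have hx0 : 0 < x := lt_of_lt_of_le one_pos hx1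
  set ε : ℝ := x ^ (-β) with hεdef
  have hε0 : 0 < ε := Real.rpow_pos_of_pos hx0 _
  clear_value x ε
  have hεR : ε ≤ Rβ := hRε.le
  have hR0 : 0 < Rβ := lt_of_lt_of_le hε0 hεR
  -- jval ≥ 1/2
  have hj : (1:ℝ)/2 ≤ jval := by linarith
  -- denominator bound
  have hD : x/2 ≤ x + Real.log (Rβ / a) := by
    have hlogR : Real.log ε ≤ Real.log Rβ := Real.log_le_log hε0 hεR
    rw [hεdef, Real.log_rpow hx0] at hlogR
    rw [Real.log_div hR0.ne' ha.ne']
    nlinarith [hlogN]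
  have hD0 : 0 < x + Real.log (Rβ / a) := lt_of_lt_of_le (by linarith) hD
  -- RHS bound: x^(1-2β)/(2πKβ D) ≤ ε²/(π Kβ)
  have hpi : (0:ℝ) < Real.pi := Real.pi_pos
  have hpi2 : (2:ℝ) ≤ Real.pi := by linarith [Real.pi_gt_three]
  have hx2b : x ^ (1 - 2*β) = x * (ε * ε) := by
    rw [show (1:ℝ) - 2*β = 1 + (-β + -β) by ring, Real.rpow_add hx0, Real.rpow_one,
      hεdef, Real.rpow_add hx0]
  have hRHS : x ^ (1 - 2*β) / (2 * Real.pi * Kβ * (x + Real.log (Rβ/a)))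
      ≤ ε * ε / (Real.pi * Kβ) := by
    rw [hx2b]
    rw [div_le_div_iff₀ (by positivity) (by positivity)]
    have hεε : 0 ≤ ε * ε := by positivity
    nlinarith [mul_le_mul_of_nonneg_left hD (by positivity : (0:ℝ) ≤ 2 * Real.pi * Kβ * (ε*ε))]
  -- integrability
  have hfε0 : 0 ≤ jval / Kβ := by positivity
  set F : ℝ → ℝ := fun r => f (max r 0) with hF
  have hFmono : Monotone F := fun r s h => hmono _ _ (le_max_right r 0) (max_le_max h le_rfl)
  have hGmeas : Measurable (fun r : ℝ => r * F r) := measurable_id.mul hFmono.measurable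
  have hμs : volume (Set.Ioc ε Rβ) ≠ ⊤ := by
    rw [Real.volume_Ioc]; exact ENNReal.ofReal_ne_top
  have hIntF : IntegrableOn (fun r : ℝ => r * F r) (Set.Ioc ε Rβ) volume := by
    apply Measure.integrableOn_of_bounded hμs hGmeas.aestronglyMeasurable (M := Rβ * f Rβ)
    filter_upwards [ae_restrict_mem measurableSet_Ioc] with r hr
    have hr0 : 0 < r := lt_trans hε0 hr.1
    have hFr : F r = f r := by rw [hF]; simp [max_eq_left hr0.le]
    rw [Real.norm_eq_abs, hFr, abs_of_nonneg (mul_nonneg hr0.le (hf0 r))]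
    exact mul_le_mul hr.2 (hmono _ _ hr0.le hr.2) (hf0 r) hR0.le
  have hInt : IntegrableOn (fun r : ℝ => r * f r) (Set.Ioc ε Rβ) volume := by
    apply hIntF.congr_fun ?_ measurableSet_Ioc
    intro r hr
    have hr0 : 0 < r := lt_trans hε0 hr.1
    simp [hF, max_eq_left hr0.le]
  -- lower bound on integral
  have hlow : (ε * (jval / Kβ)) * (Rβ - ε) ≤ ∫ r in Set.Ioc ε Rβ, r * f r := by
    have := setIntegral_ge_of_const_le_real (c := ε * (jval / Kβ)) measurableSet_Ioc hμs
      (fun r hr => by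
        have hr0 : 0 < r := lt_trans hε0 hr.1
        have : f ε ≤ f r := hmono _ _ hε0.le hr.1.le
        rw [hfε] at this
        exact mul_le_mul hr.1.le this hfε0 hr0.le) hInt
    rwa [Real.volume_real_Ioc_of_le hεR] at this
  rw [hint] at hlow
  have hkey : (ε * (jval / Kβ)) * (Rβ - ε) ≤ ε * ε / (Real.pi * Kβ) := le_trans hlow hRHS
  have h1 : ε / (2 * Kβ) * (Rβ - ε) ≤ ε * ε / (Real.pi * Kβ) := by
    refine le_trans (mul_le_mul_of_nonneg_right ?_ (by linarith : (0:ℝ) ≤ Rβ - ε)) hkey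
    rw [div_le_iff₀ (by positivity)]
    have hq : jval / Kβ * (2 * Kβ) = 2 * jval := by field_simp
    calc ε ≤ ε * (2 * jval) := by nlinarith
      _ = ε * (jval / Kβ) * (2 * Kβ) := by rw [mul_assoc, hq]
  have h2 : ε * ε / (Real.pi * Kβ) ≤ ε * ε / (2 * Kβ) := by
    rw [div_le_div_iff₀ (by positivity) (by positivity)]
    exact mul_le_mul_of_nonneg_left (mul_le_mul_of_nonneg_right hpi2 hK0.le)
      (mul_nonneg hε0.le hε0.le)
  have h3 : ε / (2 * Kβ) * (Rβ - ε) ≤ ε * ε / (2 * Kβ) := le_trans h1 h2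
  have h2K : (0:ℝ) < 2 * Kβ := by linarith
  rw [div_mul_eq_mul_div, div_le_div_iff_of_pos_right h2K] at h3
  have h4 : Rβ - ε ≤ ε := le_of_mul_le_mul_left h3 hε0
  linarith
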